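/- The set of k Chebyshev points cos((2j-1)π/(2k)), j = 1,…,k, with k = mn and m > 1 an integer, is a norming set for polynomials of degree ≤ n on [-1,1] with constant c_m = 1/cos(π/(2m)): for every real polynomial p of degree at most n, max_{x ∈ [-1,1]} |p(x)| ≤ c_m · max_{j} |p(cos((2j-1)π/(2mn)))|. -/

import Mathlib

set_option maxHeartbeats 1000000

open Real Polynomial

lemma two_cos_complex (θ : ℝ) :
    (Complex.exp (θ * Complex.I))^2 + 1 =
      Complex.exp (θ * Complex.I) * (2 * (Real.cos θ : ℂ)) := by
  have h1 := Complex.exp_mul_I (x := (θ:ℂ))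
  have h2 := Complex.exp_mul_I (x := (-θ:ℂ))
  have : Complex.exp ((θ:ℂ) * Complex.I) + Complex.exp ((-θ:ℂ) * Complex.I)
      = 2 * (Real.cos θ : ℂ) := by
    rw [h1, h2, Complex.cos_neg, Complex.sin_neg, Complex.ofReal_cos]
    ring
  have hmul : Complex.exp ((θ:ℂ) * Complex.I) * Complex.exp ((-θ:ℂ) * Complex.I) = 1 := by
    rw [← Complex.exp_add]; ring_nf; exact Complex.exp_zero
  calc (Complex.exp (θ * Complex.I))^2 + 1
      = Complex.exp ((θ:ℂ) * Complex.I) *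
        (Complex.exp ((θ:ℂ) * Complex.I) + Complex.exp ((-θ:ℂ) * Complex.I)) := by
        rw [mul_add, hmul]; ring
    _ = _ := by rw [this]

lemma cheb_rep (n : ℕ) (p : Polynomial ℝ) (hp : p.natDegree ≤ n) (A τ : ℝ) :
    ∃ G : Polynomial ℂ, G.natDegree ≤ 2 * n ∧ ∀ θ : ℝ,
      G.eval (Complex.exp (θ * Complex.I)) =
        Complex.exp (((n : ℝ) * θ : ℝ) * Complex.I) *
          ((A * Real.cos (n * (θ - τ)) - p.eval (Real.cos θ) : ℝ) : ℂ) := by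
  classical
  set P : Polynomial ℂ :=
    ∑ k ∈ Finset.range (n+1),
      Polynomial.C ((p.coeff k : ℂ) / 2^k) * (Polynomial.X^2+1)^k * Polynomial.X^(n-k) with hP
  set G : Polynomial ℂ :=
    Polynomial.C ((A:ℂ)/2 * Complex.exp (-((n:ℝ)*τ) * Complex.I)) * Polynomial.X^(2*n)
    + Polynomial.C ((A:ℂ)/2 * Complex.exp (((n:ℝ)*τ) * Complex.I)) - P with hG
  refine ⟨G, ?_, ?_⟩
  · have hPdeg : P.natDegree ≤ 2 * n := by
      refine (Polynomial.natDegree_sum_le _ _).trans ?_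
      rw [Finset.fold_max_le]
      refine ⟨Nat.zero_le _, fun k hk => ?_⟩
      simp only [Function.comp]
      refine (Polynomial.natDegree_mul_le).trans ?_
      have h1 : (Polynomial.C ((p.coeff k : ℂ) / 2^k) * (Polynomial.X^2+1)^k).natDegree ≤ 2 * k := by
        refine (Polynomial.natDegree_mul_le).trans ?_
        simp only [Polynomial.natDegree_C, zero_add]
        refine (Polynomial.natDegree_pow_le).trans ?_
        have : (Polynomial.X^2+1 : Polynomial ℂ).natDegree ≤ 2 := by
          refine (Polynomial.natDegree_add_le _ _).trans ?_
          simp [Polynomial.natDegree_X_pow]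
        calc k * (Polynomial.X^2+1 : Polynomial ℂ).natDegree ≤ k * 2 :=
              Nat.mul_le_mul_left k this
          _ = 2 * k := Nat.mul_comm _ _
      have hk' : k ≤ n := Nat.lt_succ_iff.mp (Finset.mem_range.mp hk)
      calc (Polynomial.C ((p.coeff k : ℂ) / 2^k) * (Polynomial.X^2+1)^k).natDegree
            + (Polynomial.X^(n-k) : Polynomial ℂ).natDegree
          ≤ 2 * k + (n - k) := by
            exact Nat.add_le_add h1 (le_of_eq (Polynomial.natDegree_X_pow _))
        _ ≤ 2 * n := by omega
    refine (Polynomial.natDegree_sub_le _ _).trans ?_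
    refine max_le ?_ hPdeg
    refine (Polynomial.natDegree_add_le _ _).trans ?_
    refine max_le ?_ ?_
    · refine (Polynomial.natDegree_mul_le).trans ?_
      rw [Polynomial.natDegree_C, Polynomial.natDegree_X_pow]; omega
    · rw [Polynomial.natDegree_C]; omega
  · intro θ
    set z : ℂ := Complex.exp (θ * Complex.I) with hz
    have hzn : ∀ j : ℕ, z ^ j = Complex.exp (((j:ℝ) * θ : ℝ) * Complex.I) := by
      intro j
      rw [hz, ← Complex.exp_nat_mul]
      push_cast
      ring_nf
    have hzne : z ≠ 0 := Complex.exp_ne_zero _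
    -- evaluate P
    have hPeval : P.eval z = z ^ n * ((p.eval (Real.cos θ) : ℝ) : ℂ) := by
      rw [hP, Polynomial.eval_finset_sum]
      have hterm : ∀ k ∈ Finset.range (n+1),
          (Polynomial.C ((p.coeff k : ℂ) / 2^k) * (Polynomial.X^2+1)^k
            * Polynomial.X^(n-k)).eval z
          = z ^ n * ((p.coeff k : ℂ) * (Real.cos θ : ℂ)^k) := by
        intro k hk
        have hk' : k ≤ n := Nat.lt_succ_iff.mp (Finset.mem_range.mp hk)
        simp only [Polynomial.eval_mul, Polynomial.eval_C, Polynomial.eval_pow,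
          Polynomial.eval_add, Polynomial.eval_X, Polynomial.eval_one]
        have h2c : z^2 + 1 = z * (2 * (Real.cos θ : ℂ)) := by
          rw [hz]; exact two_cos_complex θ
        rw [h2c]
        have hzk : z ^ k * z ^ (n - k) = z ^ n := by
          rw [← pow_add]; congr 1; omega
        have h2 : ((p.coeff k:ℂ)/2^k) * (2:ℂ)^k = (p.coeff k : ℂ) :=
          div_mul_cancel₀ _ (pow_ne_zero _ two_ne_zero)
        calc (p.coeff k : ℂ)/2^k * (z * (2 * (Real.cos θ:ℂ)))^k * z^(n-k)
            = (((p.coeff k : ℂ)/2^k) * (2:ℂ)^k) * (Real.cos θ:ℂ)^k * (z^k * z^(n-k)) := by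
              rw [mul_pow, mul_pow]; ring
          _ = z ^ n * ((p.coeff k : ℂ) * (Real.cos θ : ℂ)^k) := by
              rw [h2, hzk]; ring
      rw [Finset.sum_congr rfl hterm, ← Finset.mul_sum]
      congr 1
      have := Polynomial.eval_eq_sum_range' (Nat.lt_succ_of_le hp) (Real.cos θ)
      rw [this]
      push_cast
      rfl
    -- evaluate G
    rw [hG]
    simp only [Polynomial.eval_sub, Polynomial.eval_add, Polynomial.eval_mul,
      Polynomial.eval_C, Polynomial.eval_pow, Polynomial.eval_X]
    rw [hPeval, hzn (2*n), hzn n]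
    have hcos : ((Real.cos ((n:ℝ) * (θ - τ)) : ℝ) : ℂ)
        = (Complex.exp (((n:ℝ)*(θ-τ) : ℝ) * Complex.I)
           + Complex.exp (-(((n:ℝ)*(θ-τ) : ℝ)) * Complex.I)) / 2 := by
      rw [Complex.exp_mul_I, Complex.exp_mul_I, Complex.ofReal_cos]
      push_cast
      rw [Complex.cos_neg, Complex.sin_neg]
      ring
    have e1 : Complex.exp ((((n:ℝ) * θ : ℝ)) * Complex.I)
        * Complex.exp ((((n:ℝ)*(θ-τ) : ℝ)) * Complex.I)
        = Complex.exp (-(((n:ℕ):ℂ) * (τ:ℂ)) * Complex.I)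
          * Complex.exp ((((2*n : ℕ):ℝ) * θ : ℝ) * Complex.I) := by
      rw [← Complex.exp_add, ← Complex.exp_add]; congr 1; push_cast; ring
    have e2 : Complex.exp ((((n:ℝ) * θ : ℝ)) * Complex.I)
        * Complex.exp (-(((n:ℝ)*(θ-τ) : ℝ)) * Complex.I)
        = Complex.exp (((n:ℕ):ℂ) * (τ:ℂ) * Complex.I) := by
      rw [← Complex.exp_add]; congr 1; push_cast; ring
    push_cast [hcos]
    push_cast at e1 e2
    linear_combination (-(A:ℂ)/2) * e1 - ((A:ℂ)/2) * e2

lemma cos_lip (a b : ℝ) : |Real.cos a - Real.cos b| ≤ |a - b| := by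
  rw [Real.cos_sub_cos]
  rw [abs_mul, abs_mul, abs_neg]
  have h1 : |Real.sin ((a+b)/2)| ≤ 1 := Real.abs_sin_le_one _
  have h2 : |Real.sin ((a-b)/2)| ≤ |(a-b)/2| := Real.abs_sin_le_abs
  have : |(2:ℝ)| = 2 := by norm_num
  rw [this]
  calc 2 * |Real.sin ((a+b)/2)| * |Real.sin ((a-b)/2)|
      ≤ 2 * 1 * |(a-b)/2| := by
        apply mul_le_mul _ h2 (abs_nonneg _) (by norm_num)
        nlinarith [abs_nonneg (Real.sin ((a+b)/2))]
    _ = |a - b| := by rw [abs_div, this]; ring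

lemma cheb_key (n : ℕ) (hn : 0 < n) (p : Polynomial ℝ) (hp : p.natDegree ≤ n)
    (S : ℝ) (hbd : ∀ y ∈ Set.Icc (-1:ℝ) 1, |p.eval y| ≤ S)
    (θs : ℝ) (hmax : p.eval (Real.cos θs) = S)
    (φ : ℝ) (hφ : |φ - θs| ≤ π / (2*n)) :
    S * Real.cos (n * (φ - θs)) ≤ p.eval (Real.cos φ) := by
  by_contra hcon
  push_neg at hcon
  have hbd' : ∀ θ : ℝ, |p.eval (Real.cos θ)| ≤ S := fun θ => hbd _ (Real.cos_mem_Icc θ)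
  have hnR : (0:ℝ) < n := Nat.cast_pos.mpr hn
  have hπ := Real.pi_pos
  have hS0 : 0 ≤ S := le_trans (abs_nonneg _) (hbd' θs)
  have hSpos : 0 < S := by
    rcases hS0.lt_or_eq with h | h
    · exact h
    · exfalso
      have h1 := hbd' φ
      rw [← h] at h1
      have : p.eval (Real.cos φ) = 0 := by
        have := abs_nonneg (p.eval (Real.cos φ)); rw [abs_le] at h1; linarith [h1.1, h1.2]
      rw [this, ← h] at hcon
      simp at hcon
  set δ : ℝ := φ - θs with hδ
  clear_value δ
  have hδne : δ ≠ 0 := by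
    intro h0
    have hφθ : φ = θs := by rw [hδ] at h0; linarith
    rw [h0, hφθ, hmax] at hcon
    simp [Real.cos_zero] at hcon
  have hδabs : |δ| ≤ π / (2*n) := hφ
  have hcosδ : 0 ≤ Real.cos (n * δ) := by
    apply Real.cos_nonneg_of_mem_Icc
    constructor
    · rw [neg_le]
      calc -(↑n * δ) ≤ |n * δ| := by rw [← abs_neg]; exact le_abs_self _
        _ = n * |δ| := by rw [abs_mul, abs_of_pos hnR]
        _ ≤ n * (π / (2*n)) := by nlinarith
        _ = π/2 := by field_simp
    · calc (↑n * δ) ≤ |n * δ| := le_abs_self _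
        _ = n * |δ| := by rw [abs_mul, abs_of_pos hnR]
        _ ≤ n * (π / (2*n)) := by nlinarith
        _ = π/2 := by field_simp
  set γ : ℝ := S * Real.cos (n * δ) - p.eval (Real.cos φ) with hγdef
  have hγ : 0 < γ := by rw [hγdef]; linarith
  clear_value γ
  set ρ : ℝ := min (γ/(3*S*n)) (π/(4*n)) with hρdef
  have hρ : 0 < ρ := lt_min (by positivity) (by positivity)
  have hρ1 : 3*S*(n*ρ) ≤ γ := by
    have h := min_le_left (γ/(3*S*n)) (π/(4*n))
    rw [← hρdef] at h
    have := (le_div_iff₀ (by positivity : (0:ℝ) < 3*S*(n:ℝ))).mp h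
    nlinarith
  have hn0 : (n:ℝ) ≠ 0 := ne_of_gt hnR
  have hρ2 : n * ρ ≤ π/4 := by
    have h := min_le_right (γ/(3*S*n)) (π/(4*n))
    rw [← hρdef] at h
    calc (n:ℝ) * ρ ≤ n * (π/(4*n)) := mul_le_mul_of_nonneg_left h (le_of_lt hnR)
      _ = π/4 := by field_simp
  have hnρ0 : 0 ≤ (n:ℝ) * ρ := by positivity
  have hcρ0' : True := True.intro
  have hcρ0 : 0 ≤ Real.cos (n * ρ) :=
    Real.cos_nonneg_of_mem_Icc ⟨by linarith, by linarith⟩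
  have hcρ1 : Real.cos (n * ρ) < 1 := by
    have := Real.strictAntiOn_cos (Set.left_mem_Icc.mpr (le_of_lt Real.pi_pos))
      (⟨by positivity, by nlinarith⟩ : (n*ρ:ℝ) ∈ Set.Icc 0 π) (by positivity)
    rwa [Real.cos_zero] at this
  clear_value ρ
  set ε : ℝ := S * (1 - Real.cos (n*ρ)) / 2 with hεdef
  have hε : 0 < ε := by rw [hεdef]; nlinarith
  have hεS : ε ≤ S/2 := by rw [hεdef]; nlinarith
  clear_value ε
  set η : ℝ := if 0 < δ then -ρ else ρ with hηdef
  have hηabs : |η| = ρ := by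
    rw [hηdef]; split <;> simp [abs_of_pos hρ, abs_of_neg, neg_pos, hρ]
  clear_value η
  set τ : ℝ := θs + η with hτdef
  clear_value τ
  set g : ℝ → ℝ := fun θ => (S+ε) * Real.cos (n*(θ-τ)) - p.eval (Real.cos θ) with hgdef
  have hgcont : Continuous g := by
    apply Continuous.sub
    · exact continuous_const.mul
        (Real.continuous_cos.comp (continuous_const.mul (continuous_id.sub continuous_const)))
    · exact p.continuous.comp Real.continuous_cos
  -- g θs < 0
  have hgθs : g θs < 0 := by
    have : Real.cos ((n:ℝ)*(θs-τ)) = Real.cos (n*ρ) := by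
      rw [hτdef]
      have : (n:ℝ) * (θs - (θs + η)) = -(n*η) := by ring
      rw [this, Real.cos_neg]
      rcases abs_eq (le_of_lt hρ) |>.mp hηabs with h | h
      · rw [h]
      · rw [h]; rw [show (n:ℝ)*(-ρ) = -(n*ρ) by ring, Real.cos_neg]
    simp only [hgdef]
    rw [this, hmax]
    nlinarith
  -- g φ > 0
  have hgφ : 0 < g φ := by
    have hlip := cos_lip ((n:ℝ)*(φ-τ)) ((n:ℝ)*δ)
    have harg : |(n:ℝ)*(φ-τ) - n*δ| = n * ρ := by
      rw [hτdef, hδ]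
      have : (n:ℝ)*(φ-(θs+η)) - n*(φ-θs) = -(n*η) := by ring
      rw [this, abs_neg, abs_mul, abs_of_pos hnR, hηabs]
    rw [harg] at hlip
    rw [abs_le] at hlip
    have h1 : Real.cos ((n:ℝ)*δ) - n*ρ ≤ Real.cos ((n:ℝ)*(φ-τ)) := by linarith [hlip.2]
    simp only [hgdef]
    have hpe : p.eval (Real.cos φ) = S * Real.cos (n * δ) - γ := by rw [hγdef]; ring
    rw [hpe]
    have hSε : (0:ℝ) < S + ε := by linarith
    have k1 := mul_le_mul_of_nonneg_left h1 (le_of_lt hSε)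
    have k2 : 0 ≤ ε * Real.cos ((n:ℝ)*δ) := mul_nonneg (le_of_lt hε) hcosδ
    have k3 : (S+ε)*((n:ℝ)*ρ) ≤ (3*S/2)*((n:ℝ)*ρ) :=
      mul_le_mul_of_nonneg_right (by linarith) hnρ0
    linarith [k1, k2, k3, hρ1, hγ]
  -- nodes
  set ψ : ℕ → ℝ := fun k => τ + k * (π / n) with hψdef
  have hgψ : ∀ k : ℕ, Even k → 0 < g (ψ k) := by
    intro k hk
    have hc : Real.cos ((n:ℝ)*(ψ k - τ)) = (-1)^k := by
      rw [hψdef]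
      have : (n:ℝ) * (τ + k * (π/n) - τ) = k * π := by field_simp; ring
      rw [this]
      have := Real.cos_nat_mul_pi_sub 0 k
      simpa using this
    rw [hgdef]; simp only
    rw [hc, hk.neg_one_pow]
    have := hbd' (ψ k)
    rw [abs_le] at this
    nlinarith [this.2]
  have hgψ' : ∀ k : ℕ, ¬ Even k → g (ψ k) < 0 := by
    intro k hk
    have hc : Real.cos ((n:ℝ)*(ψ k - τ)) = (-1)^k := by
      rw [hψdef]
      have : (n:ℝ) * (τ + k * (π/n) - τ) = k * π := by field_simp; ring
      rw [this]
      have := Real.cos_nat_mul_pi_sub 0 k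
      simpa using this
    rw [hgdef]; simp only
    rw [hc, Odd.neg_one_pow (Nat.not_even_iff_odd.mp hk)]
    have := hbd' (ψ k)
    rw [abs_le] at this
    nlinarith [this.1]
  -- numeric helper facts
  have hπn : 0 < π / n := by positivity
  have hnδ : (n:ℝ) * |δ| ≤ π/2 := by
    have h := mul_le_mul_of_nonneg_left hδabs (le_of_lt hnR)
    calc (n:ℝ)*|δ| ≤ n * (π/(2*n)) := h
      _ = π/2 := by field_simp
  have hφeq : φ = θs + δ := by rw [hδ]; ring
  have hψval : ∀ k : ℕ, ψ k = τ + k*(π/n) := by intro k; rw [hψdef]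
  have hψinc : ∀ k : ℕ, ψ k < ψ (k+1) := by
    intro k
    rw [hψval, hψval]
    have : ((k+1:ℕ):ℝ) = (k:ℝ) + 1 := by push_cast; ring
    rw [this]
    nlinarith [hπn]
  have hψmono : ∀ a b : ℕ, a < b → ψ a < ψ b := by
    intro a b hab
    induction b with
    | zero => omega
    | succ b ih =>
      rcases Nat.lt_or_ge a b with h | h
      · exact (ih h).trans (hψinc b)
      · have : a = b := by omega
        rw [this]; exact hψinc b
  -- the alternating chain
  have hchain : ∃ c : ℕ → ℝ,
      (∀ i, i ≤ 2*n → c i < c (i+1)) ∧ (c (2*n+1) - c 0 < 2*π) ∧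
      (∀ i, i ≤ 2*n+1 → (Even i → 0 < g (c i)) ∧ (¬ Even i → g (c i) < 0)) := by
    rcases lt_or_gt_of_ne hδne with hδneg | hδpos
    · -- δ < 0, η = ρ
      have hη : η = ρ := by rw [hηdef, if_neg (by linarith)]
      refine ⟨fun i => match i with | 0 => φ | 1 => θs | (j+2) => ψ j, ?_, ?_, ?_⟩
      · intro i hi
        match i with
        | 0 => show φ < θs; linarith [hφeq, abs_nonneg δ]
        | 1 =>
          show θs < ψ 0
          rw [hψval]; push_cast
          rw [hτdef, hη]
          linarith
        | (j+2) => exact hψinc j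
      · have hk : 2*n+1 = (2*n-1)+2 := by omega
        rw [hk]
        show ψ (2*n-1) - φ < 2*π
        rw [hψval, hτdef, hη, hφeq]
        have h2 : ((2*n-1:ℕ):ℝ) = 2*(n:ℝ) - 1 := by
          have : (1:ℕ) ≤ 2*n := by omega
          push_cast [Nat.cast_sub this]
          ring
        rw [h2]
        have h3 : (2*(n:ℝ)-1) * (π/n) = 2*π - π/n := by field_simp
        rw [h3]
        have h4 : (n:ℝ)*(ρ - δ) < π := by
          have : -δ ≤ |δ| := neg_le_abs δ
          nlinarith [hρ2, hnδ, hπ]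
        have h5 : ρ - δ < π/n := by
          rw [lt_div_iff₀ hnR]; nlinarith [h4]
        linarith
      · intro i hi
        match i with
        | 0 => exact ⟨fun _ => hgφ, fun h => absurd Even.zero h⟩
        | 1 => exact ⟨fun h => absurd h (by simp), fun _ => hgθs⟩
        | (j+2) =>
          constructor
          · intro hev
            have hj : Even j := by rw [Nat.even_iff] at hev ⊢; omega
            exact hgψ j hj
          · intro hodd
            have hj : ¬ Even j := by
              rw [Nat.even_iff] at hodd ⊢; omega
            exact hgψ' j hj
    · -- δ > 0, η = -ρ
      have hη : η = -ρ := by rw [hηdef, if_pos hδpos]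
      refine ⟨fun i => match i with | 0 => τ | 1 => θs | 2 => φ | (j+3) => ψ (j+1), ?_, ?_, ?_⟩
      · intro i hi
        match i with
        | 0 => show τ < θs; rw [hτdef, hη]; linarith
        | 1 => show θs < φ; linarith [hφeq]
        | 2 =>
          show φ < ψ 1
          rw [hψval, hτdef, hη, hφeq]
          push_cast
          have h4 : (n:ℝ)*(δ + ρ) < π := by
            have : δ ≤ |δ| := le_abs_self δ
            nlinarith [hρ2, hnδ, hπ]
          have h5 : δ + ρ < π/n := by
            rw [lt_div_iff₀ hnR]; nlinarith [h4]
          linarith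
        | (j+3) => exact hψinc (j+1)
      · have hk : 2*n+1 = (2*n-2)+3 := by omega
        rw [hk]
        show ψ ((2*n-2)+1) - τ < 2*π
        have h1 : (2*n-2)+1 = 2*n-1 := by omega
        rw [h1, hψval]
        have h2 : ((2*n-1:ℕ):ℝ) = 2*(n:ℝ) - 1 := by
          have : (1:ℕ) ≤ 2*n := by omega
          push_cast [Nat.cast_sub this]
          ring
        rw [h2]
        have h3 : (2*(n:ℝ)-1) * (π/n) = 2*π - π/n := by field_simp
        rw [h3]
        linarith [hπn]
      · intro i hi
        match i with
        | 0 =>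
          refine ⟨fun _ => ?_, fun h => absurd Even.zero h⟩
          have h0 := hgψ 0 Even.zero
          have : ψ 0 = τ := by rw [hψval]; push_cast; ring
          rwa [this] at h0
        | 1 => exact ⟨fun h => absurd h (by simp), fun _ => hgθs⟩
        | 2 => exact ⟨fun _ => hgφ, fun h => absurd (by simp : Even 2) h⟩
        | (j+3) =>
          constructor
          · intro hev
            have hj : Even (j+1) := by rw [Nat.even_iff] at hev ⊢; omega
            exact hgψ (j+1) hj
          · intro hodd
            have hj : ¬ Even (j+1) := by rw [Nat.even_iff] at hodd ⊢; omega
            exact hgψ' (j+1) hj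
  obtain ⟨c, hcmono, hcspan, hcsign⟩ := hchain
  -- weak monotonicity of the chain
  have hcle : ∀ b, b ≤ 2*n+1 → ∀ a, a ≤ b → c a ≤ c b := by
    intro b
    induction b with
    | zero => intro _ a ha; rw [Nat.le_zero.mp ha]
    | succ b ih =>
      intro hb a ha
      rcases eq_or_lt_of_le ha with h | h
      · rw [h]
      · exact le_trans (ih (by omega) a (by omega)) (le_of_lt (hcmono b (by omega)))
  -- roots via IVT
  have hex : ∀ i : ℕ, ∃ r : ℝ, i ≤ 2*n → (r ∈ Set.Ioo (c i) (c (i+1)) ∧ g r = 0) := by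
    intro i
    by_cases hi : i ≤ 2*n
    · rcases Nat.even_or_odd i with he | ho
      · have h1 : 0 < g (c i) := (hcsign i (by omega)).1 he
        have h2 : g (c (i+1)) < 0 :=
          (hcsign (i+1) (by omega)).2 (by simpa [Nat.even_add_one] using he)
        have hIVT := intermediate_value_Ioo' (le_of_lt (hcmono i hi)) hgcont.continuousOn
        obtain ⟨r, hr, hgr⟩ := hIVT (⟨h2, h1⟩ : (0:ℝ) ∈ Set.Ioo (g (c (i+1))) (g (c i)))
        exact ⟨r, fun _ => ⟨hr, hgr⟩⟩
      · have h1 : g (c i) < 0 := (hcsign i (by omega)).2 (Nat.not_even_iff_odd.mpr ho)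
        have h2 : 0 < g (c (i+1)) :=
          (hcsign (i+1) (by omega)).1 (Nat.even_add_one.mpr (Nat.not_even_iff_odd.mpr ho))
        have hIVT := intermediate_value_Ioo (le_of_lt (hcmono i hi)) hgcont.continuousOn
        obtain ⟨r, hr, hgr⟩ := hIVT (⟨h1, h2⟩ : (0:ℝ) ∈ Set.Ioo (g (c i)) (g (c (i+1))))
        exact ⟨r, fun _ => ⟨hr, hgr⟩⟩
    · exact ⟨0, fun h => absurd h hi⟩
  choose r hr using hex
  have hrmem : ∀ i, i ≤ 2*n → r i ∈ Set.Ioo (c i) (c (i+1)) := fun i hi => (hr i hi).1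
  have hrzero : ∀ i, i ≤ 2*n → g (r i) = 0 := fun i hi => (hr i hi).2
  have hrmono : ∀ i j, i < j → j ≤ 2*n → r i < r j := by
    intro i j hij hj
    have h1 : r i < c (i+1) := (hrmem i (by omega)).2
    have h2 : c (i+1) ≤ c j := hcle j (by omega) (i+1) (by omega)
    have h3 : c j < r j := (hrmem j hj).1
    linarith
  have hrlow : ∀ i, i ≤ 2*n → c 0 < r i := fun i hi =>
    lt_of_le_of_lt (hcle i (by omega) 0 (by omega)) (hrmem i hi).1
  have hrhigh : ∀ i, i ≤ 2*n → r i < c (2*n+1) := fun i hi =>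
    lt_of_lt_of_le (hrmem i hi).2 (hcle (2*n+1) (le_refl _) (i+1) (by omega))
  -- complexify
  obtain ⟨G, hGdeg, hGid⟩ := cheb_rep n p hp (S+ε) τ
  have hgid : ∀ θ : ℝ, G.eval (Complex.exp (θ * Complex.I)) =
      Complex.exp (((n:ℝ) * θ : ℝ) * Complex.I) * ((g θ : ℝ) : ℂ) := by
    intro θ
    rw [hgdef]
    exact hGid θ
  have hGne : G ≠ 0 := by
    intro h0
    have h1 := hgid (c 0)
    rw [h0] at h1
    simp only [Polynomial.eval_zero] at h1
    have h2 : ((g (c 0) : ℝ) : ℂ) = 0 := by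
      rcases mul_eq_zero.mp h1.symm with h | h
      · exact absurd h (Complex.exp_ne_zero _)
      · exact h
    have h3 : g (c 0) = 0 := by exact_mod_cast h2
    have h4 := (hcsign 0 (by omega)).1 Even.zero
    linarith
  set f : Fin (2*n+1) → ℂ := fun i => Complex.exp ((r i) * Complex.I) with hfdef
  have hfinj : Function.Injective f := by
    intro i j hij
    rw [hfdef] at hij
    simp only at hij
    rw [Complex.exp_eq_exp_iff_exists_int] at hij
    obtain ⟨t, ht⟩ := hij
    have ht' : ((r i : ℝ) : ℂ) * Complex.I = ((r j + 2*π*t : ℝ) : ℂ) * Complex.I := by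
      rw [ht]; push_cast; ring
    have ht2 : ((r i : ℝ) : ℂ) = ((r j + 2*π*t : ℝ) : ℂ) :=
      mul_right_cancel₀ Complex.I_ne_zero ht'
    have ht3 : r i = r j + 2*π*t := by exact_mod_cast ht2
    have hi2 : (i:ℕ) ≤ 2*n := by omega
    have hj2 : (j:ℕ) ≤ 2*n := by omega
    have hd : |r i - r j| < 2*π := by
      rw [abs_lt]
      constructor
      · have := hrlow i hi2; have := hrhigh j hj2; linarith
      · have := hrhigh i hi2; have := hrlow j hj2; linarith
    have htabs : |(t:ℝ)| < 1 := by
      rw [ht3] at hd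
      have : |2*π*t| < 2*π := by simpa using hd
      rw [abs_mul, abs_of_pos (by linarith : (0:ℝ) < 2*π)] at this
      nlinarith [abs_nonneg ((t:ℝ))]
    have ht0 : t = 0 := by
      have h5 : |t| < 1 := by exact_mod_cast htabs
      have h6 := abs_lt.mp h5
      omega
    rw [ht0] at ht3
    simp at ht3
    by_contra hne
    rcases Fin.lt_or_lt_of_ne hne with h | h
    · exact absurd ht3 (ne_of_lt (hrmono i j h hj2))
    · exact absurd ht3.symm (ne_of_lt (hrmono j i h hi2))
  have hGzero : G = 0 := by
    apply Polynomial.eq_zero_of_natDegree_lt_card_of_eval_eq_zero G hfinj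
    · intro i
      rw [hfdef]
      simp only
      rw [hgid (r i)]
      rw [hrzero i (by omega)]
      simp
    · simpa using Nat.lt_succ_of_le hGdeg
  exact hGne hGzero

theorem chebyshev_points_norming (m n : ℕ) (hm : 1 < m) (hn : 0 < n)
    (p : Polynomial ℝ) (hp : p.natDegree ≤ n) :
    ∀ x ∈ Set.Icc (-1 : ℝ) 1,
      |p.eval x| ≤ (1 / Real.cos (π / (2 * m))) *
        ⨆ j : Fin (m * n),
          |p.eval (Real.cos ((2 * (j : ℝ) + 1) * π / (2 * (m : ℝ) * n)))| := by
  intro x hx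
  have hπ := Real.pi_pos
  set k : ℕ := m * n with hkdef
  have hk1 : 1 ≤ k := by
    have : 1 * 1 ≤ m * n := Nat.mul_le_mul (by omega) hn
    simpa using this
  have hkn : n ≤ k := by
    calc n = 1 * n := (one_mul n).symm
      _ ≤ m * n := Nat.mul_le_mul_right n (by omega)
  have hkR : (0:ℝ) < k := by exact_mod_cast hk1
  have hnR : (0:ℝ) < n := Nat.cast_pos.mpr hn
  have hmR : (2:ℝ) ≤ m := by exact_mod_cast hm
  have hcm : 0 < Real.cos (π / (2*m)) := by
    apply Real.cos_pos_of_mem_Ioo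
    constructor
    · have : 0 < π / (2*(m:ℝ)) := by positivity
      linarith
    · rw [div_lt_div_iff₀ (by positivity) (by norm_num)]
      nlinarith
  haveI : Nonempty (Fin k) := ⟨⟨0, by omega⟩⟩
  set M : ℝ := ⨆ j : Fin (m * n),
    |p.eval (Real.cos ((2 * (j : ℝ) + 1) * π / (2 * (m : ℝ) * n)))| with hMdef
  have hMle : ∀ j : Fin (m*n),
      |p.eval (Real.cos ((2 * (j : ℝ) + 1) * π / (2 * (m : ℝ) * n)))| ≤ M := by
    intro j
    exact le_ciSup (f := fun j : Fin (m*n) =>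
      |p.eval (Real.cos ((2 * (j : ℝ) + 1) * π / (2 * (m : ℝ) * n)))|)
      (Set.Finite.bddAbove (Set.finite_range _)) j
  -- extremum of |p|
  obtain ⟨xs, hxs, hmax'⟩ :=
    (isCompact_Icc : IsCompact (Set.Icc (-1:ℝ) 1)).exists_isMaxOn
    (Set.nonempty_Icc.mpr (by norm_num : (-1:ℝ) ≤ 1))
    (p.continuous.abs.continuousOn : ContinuousOn (fun y => |p.eval y|) (Set.Icc (-1) 1))
  have hmax : ∀ y ∈ Set.Icc (-1:ℝ) 1, |p.eval y| ≤ |p.eval xs| := fun y hy => hmax' hy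
  set S : ℝ := |p.eval xs| with hSdef
  -- sign normalization
  set q : Polynomial ℝ := if 0 ≤ p.eval xs then p else -p with hqdef
  have hqdeg : q.natDegree ≤ n := by
    rw [hqdef]; split
    · exact hp
    · rwa [Polynomial.natDegree_neg]
  have hqabs : ∀ y : ℝ, |q.eval y| = |p.eval y| := by
    intro y
    rw [hqdef]; split
    · rfl
    · rw [Polynomial.eval_neg, abs_neg]
  have hbdq : ∀ y ∈ Set.Icc (-1:ℝ) 1, |q.eval y| ≤ S := by
    intro y hy; rw [hqabs]; exact hmax y hy
  set θs : ℝ := Real.arccos xs with hθsdef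
  have hcosθs : Real.cos θs = xs := Real.cos_arccos hxs.1 hxs.2
  have hθs0 : 0 ≤ θs := Real.arccos_nonneg xs
  have hθsπ : θs ≤ π := Real.arccos_le_pi xs
  have hqmax : q.eval (Real.cos θs) = S := by
    rw [hcosθs, hqdef, hSdef]
    split
    · rename_i h; rw [abs_of_nonneg h]
    · rename_i h; rw [Polynomial.eval_neg, abs_of_neg (lt_of_not_ge h)]
  -- nearest Chebyshev node
  set j0 : ℕ := ⌊θs * k / π⌋₊ with hj0def
  set j : ℕ := min j0 (k-1) with hjdef
  have hjk : j < k := by omega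
  have hlow : (j:ℝ) ≤ θs * k / π := by
    have h1 : (j:ℝ) ≤ (j0:ℝ) := by exact_mod_cast (min_le_left j0 (k-1))
    exact h1.trans (Nat.floor_le (by positivity))
  have hhigh : θs * k / π ≤ (j:ℝ) + 1 := by
    by_cases hc : j0 ≤ k-1
    · have hj' : j = j0 := by omega
      rw [hj']
      exact le_of_lt (Nat.lt_floor_add_one _)
    · have hj' : j = k-1 := by omega
      have hκ : ((k-1:ℕ):ℝ) = (k:ℝ) - 1 := by
        push_cast [Nat.cast_sub hk1]; ring
      rw [hj', hκ]
      have : θs * k / π ≤ k := by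
        rw [div_le_iff₀ hπ]
        nlinarith
      linarith
  set φj : ℝ := (2*(j:ℝ)+1) * π / (2*k) with hφjdef
  have hnear : |φj - θs| ≤ π / (2*k) := by
    have hθlow : (j:ℝ) * (π/k) ≤ θs := by
      have := mul_le_mul_of_nonneg_right hlow (le_of_lt (by positivity : (0:ℝ) < π/k))
      calc (j:ℝ) * (π/k) ≤ θs * k / π * (π/k) := this
        _ = θs := by field_simp
    have hθhigh : θs ≤ ((j:ℝ)+1) * (π/k) := by
      have := mul_le_mul_of_nonneg_right hhigh (le_of_lt (by positivity : (0:ℝ) < π/k))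
      calc θs = θs * k / π * (π/k) := by field_simp
        _ ≤ ((j:ℝ)+1) * (π/k) := this
    have hhalf : π/(2*(k:ℝ)) = (π/(k:ℝ))/2 := by rw [div_div, mul_comm]
    rw [abs_le, hφjdef]
    constructor
    · have h9 : (2*(j:ℝ)+1) * π / (2*k) = (j:ℝ)*(π/k) + π/(2*k) := by field_simp
      rw [h9]
      linarith [hθhigh, hhalf]
    · have h9 : (2*(j:ℝ)+1) * π / (2*k) = ((j:ℝ)+1)*(π/k) - π/(2*k) := by field_simp; ring
      rw [h9]
      linarith [hθlow, hhalf]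
  have hφn : |φj - θs| ≤ π / (2*n) := by
    refine hnear.trans ?_
    apply div_le_div_of_nonneg_left (le_of_lt hπ) (by positivity)
    have : (n:ℝ) ≤ k := by exact_mod_cast hkn
    linarith
  -- apply the key lemma
  have hkey := cheb_key n hn q hqdeg S hbdq θs hqmax φj hφn
  -- cos (n * (φj - θs)) ≥ cos (π/(2m))
  have hccomp : Real.cos (π/(2*m)) ≤ Real.cos ((n:ℝ) * (φj - θs)) := by
    have habs : |(n:ℝ) * (φj - θs)| ≤ π/(2*m) := by
      rw [abs_mul, abs_of_pos hnR]
      have h1 : (n:ℝ) * |φj - θs| ≤ (n:ℝ) * (π/(2*k)) :=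
        mul_le_mul_of_nonneg_left hnear (le_of_lt hnR)
      have h2 : (n:ℝ) * (π/(2*k)) = π/(2*m) := by
        rw [hkdef]
        push_cast
        field_simp
      linarith
    calc Real.cos (π/(2*m)) ≤ Real.cos |(n:ℝ) * (φj - θs)| := by
          apply Real.cos_le_cos_of_nonneg_of_le_pi (abs_nonneg _) ?_ habs
          have : π/(2*(m:ℝ)) ≤ π/2 := by
            apply div_le_div_of_nonneg_left (le_of_lt hπ) (by norm_num)
            linarith
          linarith
      _ = Real.cos ((n:ℝ) * (φj - θs)) := Real.cos_abs _
  have hSM : S * Real.cos (π/(2*m)) ≤ M := by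
    have h1 : S * Real.cos (π/(2*m)) ≤ S * Real.cos ((n:ℝ) * (φj - θs)) :=
      mul_le_mul_of_nonneg_left hccomp (abs_nonneg _)
    have h2 : q.eval (Real.cos φj) ≤ |q.eval (Real.cos φj)| := le_abs_self _
    have h3 : |q.eval (Real.cos φj)| = |p.eval (Real.cos φj)| := hqabs _
    set jf : Fin (m*n) := ⟨j, by rw [← hkdef]; exact hjk⟩ with hjfdef
    have h4 : (2 * ((jf:ℕ) : ℝ) + 1) * π / (2 * (m:ℝ) * n) = φj := by
      rw [hφjdef, hjfdef]
      simp only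
      rw [hkdef]
      push_cast
      ring_nf
    have h5 := hMle jf
    rw [h4] at h5
    calc S * Real.cos (π/(2*m)) ≤ S * Real.cos ((n:ℝ) * (φj - θs)) := h1
      _ ≤ q.eval (Real.cos φj) := hkey
      _ ≤ |p.eval (Real.cos φj)| := by rw [← h3]; exact h2
      _ ≤ M := h5
  have hfinal : |p.eval x| ≤ S := hmax x hx
  have hM : S ≤ (1 / Real.cos (π / (2 * m))) * M := by
    rw [one_div, inv_mul_eq_div, le_div_iff₀ hcm]
    exact hSM
  exact hfinal.trans hM
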